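/- For A ⊆ E in the hypercube Q_d with |A| ≤ d^C for a fixed constant C, one has |A| = O(|N(A)|/d); i.e., there is a constant c = c(C) such that |A| ≤ c·|N(A)|/d for all large d. -/

import Mathlib

/-- The `d`-dimensional hypercube graph. -/
def cubeGraph (d : ℕ) : SimpleGraph (Fin d → ZMod 2) where
  Adj x y := hammingDist x y = 1
  symm := by constructor; intro x y h; rwa [hammingDist_comm]
  loopless := by constructor; intro x h; simp [hammingDist_self] at h

/-- The even bipartition class of the hypercube. -/
def evenSide (d : ℕ) : Set (Fin d → ZMod 2) := {v | ∑ i, v i = 0}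

/-- The neighbourhood of a set of vertices. -/
def nbhd {V : Type*} (G : SimpleGraph V) (A : Set V) : Set V := {y | ∃ a ∈ A, G.Adj a y}

open Finset
open scoped FinsetFamily
attribute [-instance] instDecidableEqFin
set_option maxHeartbeats 1000000

lemma pow_le_choose (r : ℕ) : ∀ j : ℕ, (r+2)^j ≤ j^j * Nat.choose (r+1+j) j := by
  intro j
  induction j with
  | zero => simp
  | succ j ih =>
    have key : Nat.choose (r+1+(j+1)) (j+1) * (j+1) = Nat.choose (r+1+(j+1)) j * (r+2) := by
      have h := Nat.choose_succ_right_eq (r+1+(j+1)) j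
      have e : r+1+(j+1)-j = r+2 := by omega
      rw [e] at h
      exact h
    have h1 : (r+2)^(j+1) = (r+2)^j * (r+2) := by ring
    have h2 : (j+1)^(j+1) * Nat.choose (r+1+(j+1)) (j+1)
        = (j+1)^j * (Nat.choose (r+1+(j+1)) j * (r+2)) := by
      rw [← key]; ring
    rw [h1, h2]
    have h3 : Nat.choose (r+1+j) j ≤ Nat.choose (r+1+(j+1)) j :=
      Nat.choose_le_choose j (by omega)
    calc (r+2)^j * (r+2) ≤ (j^j * Nat.choose (r+1+j) j) * (r+2) :=
          Nat.mul_le_mul_right _ ih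
      _ ≤ (j+1)^j * (Nat.choose (r+1+(j+1)) j * (r+2)) := by
          rw [← mul_assoc]
          exact Nat.mul_le_mul (Nat.mul_le_mul (Nat.pow_le_pow_left (by omega) j) h3) le_rfl

lemma KK_aux (d r m D' k' : ℕ) (hD'pos : 0 < D') (hrk : r+1 ≤ k')
    (hC : Nat.choose k' (r+1) < m * D')
    (𝒜 : Finset (Finset (Fin d))) (hsz : (↑𝒜 : Set (Finset (Fin d))).Sized r)
    (hm : 𝒜.card = m) :
    Nat.choose k' r ≤ m + (∂ 𝒜).card * D' := by
  have hdn : d ≤ d + D' + k' := by omega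
  set ι : Fin d ↪ Fin (d + D' + k') := Fin.castLEEmb hdn with hι
  set κ : Fin D' ↪ Fin (d + D' + k') := ⟨fun j => ⟨d + j.val, by omega⟩, by
    intro a b hab
    simp only [Fin.mk.injEq] at hab
    exact Fin.ext (by omega)⟩ with hκ
  have hκι : ∀ (s : Finset (Fin d)) (x : Fin D'), κ x ∉ s.map ι := by
    intro s x hmem
    rw [Finset.mem_map] at hmem
    obtain ⟨a, _, ha⟩ := hmem
    have h2 : (κ x).val = d + x.val := rfl
    have h3 : (ι a).val = a.val := rfl
    have := a.isLt
    rw [ha] at h3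
    omega
  set f : Finset (Fin d) × Fin D' → Finset (Fin (d + D' + k')) :=
    fun p => insert (κ p.2) (p.1.map ι) with hf
  set ℬ := (𝒜 ×ˢ (Finset.univ : Finset (Fin D'))).image f with hℬ
  have hinj : Set.InjOn f ↑(𝒜 ×ˢ (Finset.univ : Finset (Fin D'))) := by
    intro p _ q _ hpq
    have hx : κ p.2 = κ q.2 := by
      have : κ p.2 ∈ f q := by rw [← hpq]; exact Finset.mem_insert_self _ _
      rcases Finset.mem_insert.1 this with h | h
      · exact h
      · exact absurd h (hκι _ _)
    have hx2 : p.2 = q.2 := κ.injective hx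
    have hs : p.1.map ι = q.1.map ι := by
      have e1 : (f p).erase (κ p.2) = p.1.map ι := Finset.erase_insert (hκι _ _)
      have e2 : (f q).erase (κ q.2) = q.1.map ι := Finset.erase_insert (hκι _ _)
      rw [← e1, ← e2, hpq, hx]
    have hs2 : p.1 = q.1 := Finset.map_injective ι hs
    exact Prod.ext hs2 hx2
  have hcardℬ : ℬ.card = m * D' := by
    rw [hℬ, Finset.card_image_of_injOn hinj, Finset.card_product, Finset.card_univ,
      Fintype.card_fin, hm]
  have hszℬ : (↑ℬ : Set (Finset (Fin (d + D' + k')))).Sized (r+1) := by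
    intro B hB
    simp only [hℬ, Finset.coe_image, Set.mem_image, Finset.mem_coe] at hB
    obtain ⟨p, hp, rfl⟩ := hB
    rw [Finset.mem_product] at hp
    show (insert (κ p.2) (p.1.map ι)).card = r + 1
    rw [Finset.card_insert_of_notMem (hκι _ _), Finset.card_map, hsz hp.1]
  have hKK : Nat.choose k' r ≤ (∂ ℬ).card := by
    have h := Finset.kruskal_katona_lovasz_form (i := 1) (r := r+1) (k := k')
      (n := d + D' + k') (by omega) hrk (by omega) hszℬ (by omega)
    simpa using h
  have hsub : ∂ ℬ ⊆ (𝒜.image (fun s => s.map ι)) ∪ (((∂ 𝒜) ×ˢ (Finset.univ : Finset (Fin D'))).image f) := by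
    intro t ht
    rw [Finset.mem_shadow_iff] at ht
    obtain ⟨B, hB, a, haB, rfl⟩ := ht
    simp only [hℬ, Finset.mem_image] at hB
    obtain ⟨p, hp, rfl⟩ := hB
    rw [Finset.mem_product] at hp
    rcases Finset.mem_insert.1 haB with h | h
    · subst h
      rw [Finset.erase_insert (hκι _ _)]
      exact Finset.mem_union_left _ (Finset.mem_image_of_mem _ hp.1)
    · obtain ⟨b, hb, rfl⟩ := Finset.mem_map.1 h
      have hne' : ι b ≠ κ p.2 := by
        intro he
        exact hκι p.1 p.2 (he ▸ h)
      rw [Finset.erase_insert_of_ne (Ne.symm hne')]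
      have e3 : (p.1.map ι).erase (ι b) = (p.1.erase b).map ι := (Finset.map_erase ι p.1 b).symm
      rw [e3]
      refine Finset.mem_union_right _ ?_
      have hmem2 : (p.1.erase b, p.2) ∈ (∂ 𝒜) ×ˢ (Finset.univ : Finset (Fin D')) :=
        Finset.mem_product.2 ⟨Finset.erase_mem_shadow hp.1 hb, Finset.mem_univ _⟩
      exact Finset.mem_image_of_mem f hmem2
  have hcard : (∂ ℬ).card ≤ m + (∂ 𝒜).card * D' := by
    calc (∂ ℬ).card ≤ (𝒜.image (fun s => s.map ι)).card
        + (((∂ 𝒜) ×ˢ (Finset.univ : Finset (Fin D'))).image f).card :=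
          le_trans (Finset.card_le_card hsub) (Finset.card_union_le _ _)
      _ ≤ m + (∂ 𝒜).card * D' := by
          refine Nat.add_le_add (le_trans (Finset.card_image_le) (le_of_eq hm)) ?_
          calc (((∂ 𝒜) ×ˢ (Finset.univ : Finset (Fin D'))).image f).card
              ≤ ((∂ 𝒜) ×ˢ (Finset.univ : Finset (Fin D'))).card := Finset.card_image_le
            _ = (∂ 𝒜).card * D' := by
                rw [Finset.card_product, Finset.card_univ, Fintype.card_fin]
  exact le_trans hKK hcard

lemma level_expansion (Cc d r : ℕ) (hd : (4*Cc+6)^(2*Cc+4) ≤ d) (hr : d ≤ 2*r+2)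
    (𝒜 : Finset (Finset (Fin d))) (hsz : (↑𝒜 : Set (Finset (Fin d))).Sized r)
    (hm : 𝒜.card ≤ d^Cc) :
    d * 𝒜.card ≤ (16*Cc+16) * (∂ 𝒜).card := by
  obtain rfl | hne := 𝒜.eq_empty_or_nonempty
  · simp
  set m := 𝒜.card with hmdef
  have hm1 : 1 ≤ m := Finset.card_pos.2 hne
  -- existence of k with m^2 ≤ choose k (r+1)
  have hex : m^2 ≤ Nat.choose (r+1+m^2) (r+1) := by
    have h1 : Nat.choose (r+1+m^2) (r+1+m^2-(m^2)) = Nat.choose (r+1+m^2) (m^2) :=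
      Nat.choose_symm (by omega)
    have e : r+1+m^2-(m^2) = r+1 := by omega
    rw [e] at h1
    rw [h1]
    calc m^2 ≤ m^2+1 := by omega
      _ = Nat.choose (m^2+1) (m^2) := (Nat.choose_succ_self_right _).symm
      _ ≤ Nat.choose (r+1+m^2) (m^2) := Nat.choose_le_choose _ (by omega)
  set P : ℕ → Prop := fun k => m^2 ≤ Nat.choose k (r+1) with hP
  have hPex : ∃ k, P k := ⟨r+1+m^2, hex⟩
  set k' := Nat.find hPex with hk'def
  have hk1 : m^2 ≤ Nat.choose k' (r+1) := Nat.find_spec hPex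
  have hmin : ∀ k < k', Nat.choose k (r+1) < m^2 := by
    intro k hk
    have := Nat.find_min hPex hk
    simpa [hP] using this
  have hk'r : r+1 ≤ k' := by
    by_contra h
    have h0 : Nat.choose k' (r+1) = 0 := Nat.choose_eq_zero_of_lt (by omega)
    rw [h0] at hk1
    have : 0 < m^2 := by positivity
    omega
  have hm2d : m^2 ≤ d^(2*Cc) := by
    calc m^2 ≤ (d^Cc)^2 := Nat.pow_le_pow_left hm 2
      _ = d^(2*Cc) := by rw [← pow_mul, mul_comm]
  -- gap bound
  have hgap : k' ≤ r + (2*Cc+2) := by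
    by_contra h
    push_neg at h
    set G := 2*Cc+1 with hG
    have hlow : Nat.choose (r+1+G) G ≥ d^(2*Cc) := by
      have p1 : (r+2)^G ≤ G^G * Nat.choose (r+1+G) G := pow_le_choose r G
      have p2 : d^G ≤ (2*(r+2))^G := Nat.pow_le_pow_left (by omega) G
      have p3 : (2*(r+2))^G = 2^G * (r+2)^G := by rw [mul_pow]
      have p4 : d^G ≤ (2^G * G^G) * Nat.choose (r+1+G) G := by
        calc d^G ≤ 2^G * (r+2)^G := by rw [← p3]; exact p2
          _ ≤ 2^G * (G^G * Nat.choose (r+1+G) G) := Nat.mul_le_mul_left _ p1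
          _ = (2^G * G^G) * Nat.choose (r+1+G) G := by ring
      have p5 : 2^G * G^G = (2*G)^G := by rw [mul_pow]
      have p6 : (2*G)^G ≤ d := by
        calc (2*G)^G = (4*Cc+2)^(2*Cc+1) := by rw [hG]; norm_num; ring_nf
          _ ≤ (4*Cc+6)^(2*Cc+1) := Nat.pow_le_pow_left (by omega) _
          _ ≤ (4*Cc+6)^(2*Cc+4) := Nat.pow_le_pow_right (by omega) (by omega)
          _ ≤ d := hd
      have p7 : d^G = d^(2*Cc) * d := by rw [hG, pow_succ]
      have p8 : (2*G)^G * (d^(2*Cc)) ≤ (2*G)^G * Nat.choose (r+1+G) G := by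
        calc (2*G)^G * (d^(2*Cc)) ≤ d * d^(2*Cc) := Nat.mul_le_mul_right _ p6
          _ = d^G := by rw [p7]; ring
          _ ≤ (2^G * G^G) * Nat.choose (r+1+G) G := p4
          _ = (2*G)^G * Nat.choose (r+1+G) G := by rw [p5]
      exact Nat.le_of_mul_le_mul_left p8 (by positivity)
    have hsymm : Nat.choose (r+1+G) (r+1) = Nat.choose (r+1+G) G := by
      have := Nat.choose_symm (show r+1 ≤ r+1+G by omega)
      have e : r+1+G-(r+1) = G := by omega
      rw [e] at this
      exact this.symm
    have hmono : Nat.choose (r+1+G) (r+1) ≤ Nat.choose (k'-1) (r+1) :=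
      Nat.choose_le_choose _ (by omega)
    have hlt : Nat.choose (k'-1) (r+1) < m^2 := hmin _ (by omega)
    omega
  -- D'
  set D' := Nat.choose k' (r+1) / m + 1 with hD'
  have hDlb : Nat.choose k' (r+1) < m * D' := by
    rw [hD', Nat.mul_add, Nat.mul_one]
    have e := Nat.div_add_mod (Nat.choose k' (r+1)) m
    have hlt := Nat.mod_lt (Nat.choose k' (r+1)) (show 0 < m by omega)
    omega
  have hDub : m * D' ≤ 2 * Nat.choose k' (r+1) := by
    have h1 : m * (Nat.choose k' (r+1) / m) ≤ Nat.choose k' (r+1) := by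
      rw [mul_comm]; exact Nat.div_mul_le_self _ _
    have h2 : m ≤ m^2 := Nat.le_self_pow (by omega) m
    rw [hD', Nat.mul_add, Nat.mul_one]
    omega
  have hD'pos : 0 < D' := by rw [hD']; exact Nat.succ_pos _
  have hkey : Nat.choose k' r ≤ m + (∂ 𝒜).card * D' :=
    KK_aux d r m D' k' hD'pos hk'r hDlb 𝒜 hsz hmdef.symm
  -- numeric endgame
  set S := (∂ 𝒜).card with hS
  set Γ := 2*Cc+2 with hΓ
  have hkr2 : k' - r ≤ Γ := by omega
  have hid : Nat.choose k' (r+1) * (r+1) = Nat.choose k' r * (k' - r) :=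
    Nat.choose_succ_right_eq k' r
  have hΓ4 : 4 * Γ ≤ d := by
    have e : (4*Cc+6)^2 = 16*Cc^2+48*Cc+36 := by ring
    calc 4 * Γ = 8*Cc + 8 := by omega
      _ ≤ (4*Cc+6)^2 := by omega
      _ ≤ (4*Cc+6)^(2*Cc+4) := Nat.pow_le_pow_right (by omega) (by omega)
      _ ≤ d := hd
  have h4 : 2*m ≤ Nat.choose k' r := by
    have c1 : m * (2*Γ) ≤ m * (r+1) := Nat.mul_le_mul_left _ (by omega)
    have c2 : m * (r+1) ≤ m^2 * (r+1) := Nat.mul_le_mul_right _ (Nat.le_self_pow (by omega) m)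
    have c3 : m^2 * (r+1) ≤ Nat.choose k' (r+1) * (r+1) := Nat.mul_le_mul_right _ hk1
    have c4 : Nat.choose k' r * (k' - r) ≤ Nat.choose k' r * Γ :=
      Nat.mul_le_mul_left _ hkr2
    have hc : m * (2*Γ) ≤ Nat.choose k' r * Γ := by
      calc m * (2*Γ) ≤ Nat.choose k' (r+1) * (r+1) := le_trans c1 (le_trans c2 c3)
        _ = Nat.choose k' r * (k' - r) := hid
        _ ≤ Nat.choose k' r * Γ := c4
    have e : m * (2*Γ) = (2*m) * Γ := by ring
    rw [e] at hc
    exact Nat.le_of_mul_le_mul_right hc (by omega)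
  have h5 : Nat.choose k' r ≤ 2 * (S * D') := by
    have := hkey
    omega
  have h6 : m * Nat.choose k' r ≤ 4 * S * Nat.choose k' (r+1) := by
    calc m * Nat.choose k' r ≤ m * (2 * (S * D')) := Nat.mul_le_mul_left _ h5
      _ = 2 * S * (m * D') := by ring
      _ ≤ 2 * S * (2 * Nat.choose k' (r+1)) := Nat.mul_le_mul_left _ hDub
      _ = 4 * S * Nat.choose k' (r+1) := by ring
  have hCpos : 0 < Nat.choose k' (r+1) := Nat.lt_of_lt_of_le (by positivity) hk1
  have h7 : m * (r+1) ≤ 4 * S * Γ := by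
    have c2 : (m * (r+1)) * Nat.choose k' (r+1) ≤ (4 * S * Γ) * Nat.choose k' (r+1) := by
      have e1 : (m * (r+1)) * Nat.choose k' (r+1) = m * (Nat.choose k' (r+1) * (r+1)) := by ring
      rw [e1, hid]
      calc m * (Nat.choose k' r * (k' - r)) = (m * Nat.choose k' r) * (k' - r) := by ring
        _ ≤ (4 * S * Nat.choose k' (r+1)) * (k' - r) := Nat.mul_le_mul_right _ h6
        _ ≤ (4 * S * Nat.choose k' (r+1)) * Γ := Nat.mul_le_mul_left _ hkr2
        _ = (4 * S * Γ) * Nat.choose k' (r+1) := by ring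
    exact Nat.le_of_mul_le_mul_right c2 hCpos
  calc d * m ≤ (2*(r+1)) * m := Nat.mul_le_mul_right _ (by omega)
    _ = 2 * (m * (r+1)) := by ring
    _ ≤ 2 * (4 * S * Γ) := Nat.mul_le_mul_left _ h7
    _ = (16*Cc+16) * S := by rw [hΓ]; ring

private def vsupp {d : ℕ} (v : Fin d → ZMod 2) : Finset (Fin d) :=
  Finset.univ.filter (fun i => v i = 1)

private def vind {d : ℕ} (s : Finset (Fin d)) : Fin d → ZMod 2 :=
  fun i => if i ∈ s then 1 else 0

private lemma zmod2_cases (a : ZMod 2) : a = 0 ∨ a = 1 := by revert a; decide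

private lemma vsupp_vind {d : ℕ} (s : Finset (Fin d)) : vsupp (vind s) = s := by
  ext i
  simp only [vsupp, vind, Finset.mem_filter, Finset.mem_univ, true_and]
  by_cases h : i ∈ s <;> simp [h]

private lemma vind_vsupp {d : ℕ} (v : Fin d → ZMod 2) : vind (vsupp v) = v := by
  funext i
  simp only [vind, vsupp, Finset.mem_filter, Finset.mem_univ, true_and]
  rcases zmod2_cases (v i) with h | h <;> simp [h]

private lemma vind_inj {d : ℕ} : Function.Injective (vind (d := d)) := by
  intro s t h
  rw [← vsupp_vind s, ← vsupp_vind t, h]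

private lemma vsupp_inj {d : ℕ} : Function.Injective (vsupp (d := d)) := by
  intro s t h
  rw [← vind_vsupp s, ← vind_vsupp t, h]

private lemma hamming_vind {d : ℕ} (s t : Finset (Fin d)) :
    hammingDist (vind s) (vind t) = (symmDiff s t).card := by
  show (Finset.filter (fun i => vind s i ≠ vind t i) Finset.univ).card = _
  congr 1
  ext i
  rw [Finset.mem_filter]
  simp only [Finset.mem_filter, Finset.mem_univ, true_and, Finset.mem_symmDiff, vind]
  by_cases hs : i ∈ s <;> by_cases ht : i ∈ t <;> simp [hs, ht]

private lemma adj_of_erase {d : ℕ} (s : Finset (Fin d)) (i : Fin d) (hi : i ∈ s) :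
    (cubeGraph d).Adj (vind s) (vind (s.erase i)) := by
  show hammingDist (vind s) (vind (s.erase i)) = 1
  rw [hamming_vind]
  have e : symmDiff s (s.erase i) = {i} := by
    ext j
    simp only [Finset.mem_symmDiff, Finset.mem_erase, Finset.mem_singleton]
    by_cases hj : j = i
    · subst hj; tauto
    · tauto
  rw [e, Finset.card_singleton]

private lemma adj_of_insert {d : ℕ} (s : Finset (Fin d)) (i : Fin d) (hi : i ∉ s) :
    (cubeGraph d).Adj (vind s) (vind (insert i s)) := by
  show hammingDist (vind s) (vind (insert i s)) = 1
  rw [hamming_vind]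
  have e : symmDiff s (insert i s) = {i} := by
    ext j
    simp only [Finset.mem_symmDiff, Finset.mem_insert, Finset.mem_singleton]
    by_cases hj : j = i
    · subst hj; tauto
    · tauto
  rw [e, Finset.card_singleton]

/-- for every fixed constant `C` there is a constant `c` such that, for all
large `d`, every `A ⊆ E` with `|A| ≤ d^C` satisfies `|A| ≤ c·|N(A)|/d`. -/
theorem small_sets_expand (C : ℕ) :
    ∃ c : ℝ, 0 < c ∧ ∃ d₀ : ℕ, ∀ d ≥ d₀, ∀ A : Set (Fin d → ZMod 2),
      A ⊆ evenSide d → A.ncard ≤ d ^ C →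
      (A.ncard : ℝ) ≤ c * (nbhd (cubeGraph d) A).ncard / d := by
  refine ⟨32*C+32, by positivity, (4*C+6)^(2*C+4), ?_⟩
  intro d hd A _ hA
  have hdpos : 0 < d := lt_of_lt_of_le (by positivity) hd
  have hAfin : A.Finite := Set.toFinite A
  have hNfin : (nbhd (cubeGraph d) A).Finite := Set.toFinite _
  set Af := hAfin.toFinset with hAfdef
  set Nf := hNfin.toFinset with hNfdef
  have hAncard : A.ncard = Af.card := Set.ncard_eq_toFinset_card _ hAfin
  have hNncard : (nbhd (cubeGraph d) A).ncard = Nf.card := Set.ncard_eq_toFinset_card _ hNfin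
  -- the level families
  set fam : ℕ → Finset (Finset (Fin d)) :=
    fun r => (Af.filter (fun v => (vsupp v).card = r)).image vsupp with hfam
  have hfamcard : ∀ r, (fam r).card = (Af.filter (fun v => (vsupp v).card = r)).card := by
    intro r
    exact Finset.card_image_of_injOn (fun x _ y _ h => vsupp_inj h)
  have hsized : ∀ r, (↑(fam r) : Set (Finset (Fin d))).Sized r := by
    intro r s hs
    simp only [hfam, Finset.coe_image, Set.mem_image, Finset.mem_coe, Finset.mem_filter] at hs
    obtain ⟨v, ⟨_, hv⟩, rfl⟩ := hs
    exact hv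
  have hszcomp : ∀ r, (↑((fam r).image (fun s => Finset.univ \ s)) :
      Set (Finset (Fin d))).Sized (d-r) := by
    intro r u hu
    simp only [Finset.coe_image, Set.mem_image, Finset.mem_coe] at hu
    obtain ⟨s, hs, rfl⟩ := hu
    rw [Finset.card_sdiff_of_subset (Finset.subset_univ s), Finset.card_univ, Fintype.card_fin,
      hsized r hs]
  have hfammle : ∀ r, (fam r).card ≤ d^C := by
    intro r
    rw [hfamcard r]
    calc (Af.filter (fun v => (vsupp v).card = r)).card ≤ Af.card := Finset.card_filter_le _ _
      _ ≤ d^C := by rw [← hAncard]; exact hA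
  have hsuppin : ∀ v : Fin d → ZMod 2, (vsupp v).card ∈ Finset.range (d+1) := by
    intro v
    rw [Finset.mem_range]
    have := Finset.card_le_univ (vsupp v)
    simp only [Finset.card_univ, Fintype.card_fin] at this
    omega
  have hsum : ∑ r ∈ Finset.range (d+1), (fam r).card = Af.card := by
    have h1 : Af.card = ∑ r ∈ Finset.range (d+1),
        (Af.filter (fun v => (vsupp v).card = r)).card :=
      Finset.card_eq_sum_card_fiberwise (fun v _ => hsuppin v)
    rw [h1]
    refine Finset.sum_congr rfl fun r _ => ?_
    rw [hfamcard r]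
  -- neighbourhood images per level
  set W : ℕ → Finset (Fin d → ZMod 2) := fun r =>
    if d ≤ 2*r then (∂ (fam r)).image vind
    else (∂ ((fam r).image (fun s => Finset.univ \ s))).image (fun t => vind (Finset.univ \ t))
    with hW
  -- membership of the original set
  have hfam_orig : ∀ r s, s ∈ fam r → vind s ∈ A := by
    intro r s hs
    simp only [hfam, Finset.mem_image, Finset.mem_filter] at hs
    obtain ⟨v, ⟨hv, _⟩, rfl⟩ := hs
    rw [vind_vsupp]
    exact (Set.Finite.mem_toFinset hAfin).1 hv
  have hWN : ∀ r, W r ⊆ Nf := by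
    intro r w hw
    simp only [hW] at hw
    rw [hNfdef, Set.Finite.mem_toFinset]
    by_cases hcase : d ≤ 2*r
    · rw [if_pos hcase] at hw
      obtain ⟨t, ht, rfl⟩ := Finset.mem_image.1 hw
      obtain ⟨s, hs, i, hi, rfl⟩ := Finset.mem_shadow_iff.1 ht
      exact ⟨vind s, hfam_orig r s hs, adj_of_erase s i hi⟩
    · rw [if_neg hcase] at hw
      obtain ⟨t, ht, rfl⟩ := Finset.mem_image.1 hw
      obtain ⟨u, hu, i, hi, rfl⟩ := Finset.mem_shadow_iff.1 ht
      obtain ⟨s, hs, rfl⟩ := Finset.mem_image.1 hu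
      have his : i ∉ s := (Finset.mem_sdiff.1 hi).2
      have e1 : (Finset.univ \ s).erase i = Finset.univ \ (insert i s) := by
        ext j
        simp only [Finset.mem_erase, Finset.mem_sdiff, Finset.mem_univ, true_and,
          Finset.mem_insert]
        tauto
      have e2 : Finset.univ \ (Finset.univ \ (insert i s)) = insert i s := by
        rw [Finset.sdiff_sdiff_self_left]
        exact Finset.univ_inter _
      rw [e1, e2]
      exact ⟨vind s, hfam_orig r s hs, adj_of_insert s i his⟩
  have hWlev : ∀ r ∈ Finset.range (d+1), ∀ w ∈ W r,
      (vsupp w).card = (if d ≤ 2*r then r-1 else r+1) := by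
    intro r hr w hw
    rw [Finset.mem_range] at hr
    simp only [hW] at hw
    by_cases hcase : d ≤ 2*r
    · rw [if_pos hcase] at hw
      rw [if_pos hcase]
      obtain ⟨t, ht, rfl⟩ := Finset.mem_image.1 hw
      rw [vsupp_vind]
      exact (hsized r).shadow ht
    · rw [if_neg hcase] at hw
      rw [if_neg hcase]
      obtain ⟨t, ht, rfl⟩ := Finset.mem_image.1 hw
      rw [vsupp_vind]
      have htc : t.card = d - r - 1 := (hszcomp r).shadow ht
      rw [Finset.card_sdiff_of_subset (Finset.subset_univ t), Finset.card_univ, Fintype.card_fin, htc]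
      omega
  -- per-level expansion transported to the cube
  have hperlevel : ∀ r ∈ Finset.range (d+1), d * (fam r).card ≤ (16*C+16) * (W r).card := by
    intro r hr
    rw [Finset.mem_range] at hr
    by_cases hcase : d ≤ 2*r
    · have hWcard : (W r).card = (∂ (fam r)).card := by
        simp only [hW, if_pos hcase]
        exact Finset.card_image_of_injOn (fun x _ y _ h => vind_inj h)
      rw [hWcard]
      exact level_expansion C d r hd (by omega) (fam r) (hsized r) (hfammle r)
    · have hinjc : ∀ x ∈ fam r, ∀ y ∈ fam r, Finset.univ \ x = Finset.univ \ y → x = y := by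
        intro x _ y _ h
        have h2 := congrArg (fun u => Finset.univ \ u) h
        simpa [Finset.sdiff_sdiff_self_left, Finset.univ_inter] using h2
      have hfc : ((fam r).image (fun s => Finset.univ \ s)).card = (fam r).card :=
        Finset.card_image_of_injOn hinjc
      have hWcard : (W r).card = (∂ ((fam r).image (fun s => Finset.univ \ s))).card := by
        simp only [hW, if_neg hcase]
        refine Finset.card_image_of_injOn ?_
        intro x _ y _ h
        have h2 : Finset.univ \ x = Finset.univ \ y := vind_inj h
        have h3 := congrArg (fun u => Finset.univ \ u) h2
        simpa [Finset.sdiff_sdiff_self_left, Finset.univ_inter] using h3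
      rw [hWcard]
      have h := level_expansion C d (d-r) hd (by omega)
        ((fam r).image (fun s => Finset.univ \ s)) (hszcomp r) (by rw [hfc]; exact hfammle r)
      rw [hfc] at h
      exact h
  -- counting: the W r are almost disjoint (at most two per level)
  set hcnt : ℕ → ℕ := fun ℓ => (Nf.filter (fun w => (vsupp w).card = ℓ)).card with hhcnt
  have hWh : ∀ r ∈ Finset.range (d+1), (W r).card ≤ hcnt (if d ≤ 2*r then r-1 else r+1) := by
    intro r hr
    refine Finset.card_le_card ?_
    intro w hw
    rw [Finset.mem_filter]
    exact ⟨hWN r hw, hWlev r hr w hw⟩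
  have hNsum : ∑ ℓ ∈ Finset.range (d+1), hcnt ℓ = Nf.card :=
    (Finset.card_eq_sum_card_fiberwise (fun w _ => hsuppin w)).symm
  have key : ∀ (s : Finset ℕ) (f : ℕ → ℕ), (∀ x ∈ s, ∀ y ∈ s, f x = f y → x = y) →
      (∀ x ∈ s, f x ∈ Finset.range (d+1)) → ∑ r ∈ s, hcnt (f r) ≤ Nf.card := by
    intro s f hinj hrange
    rw [← Finset.sum_image hinj]
    calc ∑ ℓ ∈ s.image f, hcnt ℓ ≤ ∑ ℓ ∈ Finset.range (d+1), hcnt ℓ :=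
          Finset.sum_le_sum_of_subset (fun ℓ hℓ => by
            obtain ⟨x, hx, rfl⟩ := Finset.mem_image.1 hℓ
            exact hrange x hx)
      _ = Nf.card := hNsum
  have hsplit : ∑ r ∈ Finset.range (d+1), hcnt (if d ≤ 2*r then r-1 else r+1)
      ≤ 2 * Nf.card := by
    rw [← Finset.sum_filter_add_sum_filter_not (Finset.range (d+1)) (fun r => d ≤ 2*r)]
    have e1 : ∑ r ∈ (Finset.range (d+1)).filter (fun r => d ≤ 2*r),
        hcnt (if d ≤ 2*r then r-1 else r+1)
        = ∑ r ∈ (Finset.range (d+1)).filter (fun r => d ≤ 2*r), hcnt (r-1) :=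
      Finset.sum_congr rfl (fun r hr => by rw [if_pos (Finset.mem_filter.1 hr).2])
    have e2 : ∑ r ∈ (Finset.range (d+1)).filter (fun r => ¬ (d ≤ 2*r)),
        hcnt (if d ≤ 2*r then r-1 else r+1)
        = ∑ r ∈ (Finset.range (d+1)).filter (fun r => ¬ (d ≤ 2*r)), hcnt (r+1) :=
      Finset.sum_congr rfl (fun r hr => by rw [if_neg (Finset.mem_filter.1 hr).2])
    have b1 : ∑ r ∈ (Finset.range (d+1)).filter (fun r => d ≤ 2*r), hcnt (r-1) ≤ Nf.card := by
      refine key _ _ ?_ ?_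
      · intro x hx y hy hxy
        have hx2 := (Finset.mem_filter.1 hx).2
        have hy2 := (Finset.mem_filter.1 hy).2
        omega
      · intro x hx
        have hx1 := Finset.mem_range.1 (Finset.mem_filter.1 hx).1
        rw [Finset.mem_range]
        omega
    have b2 : ∑ r ∈ (Finset.range (d+1)).filter (fun r => ¬ (d ≤ 2*r)), hcnt (r+1) ≤ Nf.card := by
      refine key _ _ ?_ ?_
      · intro x _ y _ hxy
        omega
      · intro x hx
        have hx2 := (Finset.mem_filter.1 hx).2
        rw [Finset.mem_range]
        omega
    rw [e1, e2]
    omega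
  have hmain : d * Af.card ≤ (32*C+32) * Nf.card := by
    calc d * Af.card = d * ∑ r ∈ Finset.range (d+1), (fam r).card := by rw [hsum]
      _ = ∑ r ∈ Finset.range (d+1), d * (fam r).card := Finset.mul_sum _ _ _
      _ ≤ ∑ r ∈ Finset.range (d+1), (16*C+16) * (W r).card := Finset.sum_le_sum hperlevel
      _ ≤ ∑ r ∈ Finset.range (d+1), (16*C+16) * hcnt (if d ≤ 2*r then r-1 else r+1) :=
          Finset.sum_le_sum (fun r hr => Nat.mul_le_mul_left _ (hWh r hr))
      _ = (16*C+16) * ∑ r ∈ Finset.range (d+1), hcnt (if d ≤ 2*r then r-1 else r+1) :=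
          (Finset.mul_sum _ _ _).symm
      _ ≤ (16*C+16) * (2 * Nf.card) := Nat.mul_le_mul_left _ hsplit
      _ = (32*C+32) * Nf.card := by ring
  rw [hAncard, hNncard]
  have hdR : (0:ℝ) < (d:ℝ) := by exact_mod_cast hdpos
  rw [le_div_iff₀ hdR]
  have hmain2 : (Af.card * d : ℕ) ≤ (32*C+32) * Nf.card := by
    rw [mul_comm]
    exact hmain
  calc (Af.card : ℝ) * (d:ℝ) = ((Af.card * d : ℕ) : ℝ) := by push_cast; ring
    _ ≤ (((32*C+32) * Nf.card : ℕ) : ℝ) := by exact_mod_cast hmain2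
    _ = (32*(C:ℝ)+32) * (Nf.card : ℝ) := by push_cast; ring
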